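/- Let X be a real-valued random variable on a probability space with E[X] = 0, and let δ > 0 be such that e^{δ|X|} is integrable. Then for every real number t with |t| ≤ δ, one has E[e^{tX}] ≤ 1 + (t/δ)² · E[e^{δ|X|}]. -/
import Mathlib


open MeasureTheory
open scoped Nat

lemma exp_le_aux (u v : ℝ) (hv : 0 < v) (huv : |u| ≤ v) :
    Real.exp u ≤ 1 + u + (u / v) ^ 2 * Real.exp v := by
  have hsum : ∀ x : ℝ, Summable (fun n : ℕ => x ^ n / n !) :=
    Real.summable_pow_div_factorial
  have hsum2 : ∀ x : ℝ, Summable (fun n : ℕ => x ^ (n + 2) / (n + 2) !) := by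
    intro x
    exact (hsum x).comp_injective (add_left_injective 2)
  have hexp_tsum : ∀ x : ℝ, Real.exp x = ∑' n : ℕ, x ^ n / n ! := by
    intro x
    rw [Real.exp_eq_exp_ℝ, NormedSpace.exp_eq_tsum_div]
  have hshift : ∀ x : ℝ, Real.exp x = 1 + x + ∑' n : ℕ, x ^ (n + 2) / (n + 2) ! := by
    intro x
    have h2 : Summable (fun n : ℕ => x ^ (n + 1) / (n + 1)!) :=
      (hsum x).comp_injective (add_left_injective 1)
    rw [hexp_tsum x, Summable.tsum_eq_zero_add (hsum x), Summable.tsum_eq_zero_add h2]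
    simp [add_assoc]
  rw [hshift u]
  have key : ∑' n : ℕ, u ^ (n + 2) / (n + 2) ! ≤ (u / v) ^ 2 * Real.exp v := by
    have hterm : ∀ n : ℕ, u ^ (n + 2) / (n + 2) ! ≤ (u / v) ^ 2 * (v ^ (n + 2) / (n + 2) !) := by
      intro n
      have h1 : u ^ (n + 2) ≤ u ^ 2 * v ^ n := by
        calc u ^ (n + 2) ≤ |u ^ (n + 2)| := le_abs_self _
          _ = |u| ^ 2 * |u| ^ n := by rw [abs_pow]; ring
          _ ≤ |u| ^ 2 * v ^ n := by gcongr
          _ = u ^ 2 * v ^ n := by rw [sq_abs]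
      have h2 : (u / v) ^ 2 * (v ^ (n + 2) / (n + 2) !) = u ^ 2 * v ^ n / (n + 2) ! := by
        field_simp
        ring
      rw [h2]
      exact div_le_div_of_nonneg_right h1 (by positivity) |>.trans_eq rfl
    calc ∑' n : ℕ, u ^ (n + 2) / (n + 2) !
        ≤ ∑' n : ℕ, (u / v) ^ 2 * (v ^ (n + 2) / (n + 2) !) :=
          Summable.tsum_le_tsum hterm (hsum2 u) ((hsum2 v).mul_left _)
      _ = (u / v) ^ 2 * ∑' n : ℕ, v ^ (n + 2) / (n + 2) ! := tsum_mul_left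
      _ ≤ (u / v) ^ 2 * Real.exp v := by
          refine mul_le_mul_of_nonneg_left ?_ (sq_nonneg _)
          rw [hexp_tsum v]
          exact Summable.tsum_le_tsum_of_inj (fun n => n + 2) (add_left_injective 2)
            (fun c _ => by positivity) (fun n => le_refl _) (hsum2 v) (hsum v)
  linarith

/-- If `E[X] = 0` and `e^{δ|X|}` is integrable for some `δ > 0`, then for every
real `t` with `|t| ≤ δ`, `E[e^{tX}] ≤ 1 + (t/δ)² E[e^{δ|X|}]`. -/
theorem stmt_0 {Ω : Type*} [MeasurableSpace Ω] (P : Measure Ω) [IsProbabilityMeasure P]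
    (X : Ω → ℝ) (hXint : Integrable X P) (hXmean : ∫ ω, X ω ∂P = 0)
    (δ : ℝ) (hδ : 0 < δ)
    (hexp : Integrable (fun ω => Real.exp (δ * |X ω|)) P)
    (t : ℝ) (ht : |t| ≤ δ) :
    ∫ ω, Real.exp (t * X ω) ∂P
      ≤ 1 + (t / δ) ^ 2 * ∫ ω, Real.exp (δ * |X ω|) ∂P := by
  have hpt : ∀ ω, Real.exp (t * X ω)
      ≤ 1 + t * X ω + (t / δ) ^ 2 * Real.exp (δ * |X ω|) := by
    intro ω
    have habs : |t * X ω| ≤ δ * |X ω| := by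
      rw [abs_mul]
      gcongr
    rcases eq_or_ne (X ω) 0 with h0 | h0
    · simp only [h0, mul_zero, Real.exp_zero, abs_zero, add_zero]
      nlinarith [sq_nonneg (t / δ)]
    have hpos : 0 < δ * |X ω| := mul_pos hδ (abs_pos.mpr h0)
    have := exp_le_aux (t * X ω) (δ * |X ω|) hpos habs
    refine this.trans ?_
    have hsq : (t * X ω / (δ * |X ω|)) ^ 2 = (t / δ) ^ 2 := by
      rw [div_pow, div_pow, mul_pow, mul_pow, sq_abs,
        mul_div_mul_right _ _ (pow_ne_zero 2 h0)]
    rw [hsq]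
  have hi1 : Integrable (fun ω => 1 + t * X ω) P := (integrable_const 1).add (hXint.const_mul t)
  have hgint : Integrable (fun ω => 1 + t * X ω + (t / δ) ^ 2 * Real.exp (δ * |X ω|)) P :=
    hi1.add (hexp.const_mul _)
  have hfmeas : AEStronglyMeasurable (fun ω => Real.exp (t * X ω)) P :=
    Real.continuous_exp.comp_aestronglyMeasurable (hXint.1.const_mul t)
  have hfint : Integrable (fun ω => Real.exp (t * X ω)) P := by
    refine hexp.mono' hfmeas (Filter.Eventually.of_forall fun ω => ?_)
    rw [Real.norm_eq_abs, abs_of_pos (Real.exp_pos _), Real.exp_le_exp]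
    calc t * X ω ≤ |t * X ω| := le_abs_self _
      _ ≤ δ * |X ω| := by rw [abs_mul]; gcongr
  calc ∫ ω, Real.exp (t * X ω) ∂P
      ≤ ∫ ω, (1 + t * X ω + (t / δ) ^ 2 * Real.exp (δ * |X ω|)) ∂P :=
        integral_mono hfint hgint hpt
    _ = 1 + (t / δ) ^ 2 * ∫ ω, Real.exp (δ * |X ω|) ∂P := by
        rw [integral_add hi1 (hexp.const_mul _),
          integral_add (integrable_const 1) (hXint.const_mul t),
          integral_const, integral_const_mul, integral_const_mul, hXmean]
        simp
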